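/- Let X and Y be metric spaces, P : X → Y a submetry, and g : Y → ℝ a locally Lipschitz function. Define the ascending slope of a function f : Z → ℝ on a metric space Z at a point z as |∇⁺f|(z) = Filter.limsup (fun w => max (f w − f z) 0 / dist w z) (𝓝[≠] z), the limsup over the punctured neighborhood filter of z. Then for every x ∈ X, the ascending slope of g ∘ P at x equals the ascending slope of g at P x. -/
import Mathlib


open Filter Topology

/-- A map `P : X → Y` between metric spaces is a submetry if it maps every open
ball onto the open ball of the same radius around the image of the center. -/
def IsSubmetry {X Y : Type*} [MetricSpace X] [MetricSpace Y] (P : X → Y) : Prop :=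
  ∀ (x : X) (r : ℝ), 0 < r → P '' Metric.ball x r = Metric.ball (P x) r

/-- The ascending slope `|∇⁺ f|(z)` of a real-valued function on a metric space. -/
noncomputable def ascendingSlope {Z : Type*} [MetricSpace Z] (f : Z → ℝ) (z : Z) : ℝ :=
  Filter.limsup (fun w => max (f w - f z) 0 / dist w z) (𝓝[≠] z)

private lemma limsup_real_bot {α : Type*} (u : α → ℝ) :
    Filter.limsup u (⊥ : Filter α) = 0 := by
  simp only [Filter.limsup, Filter.limsSup, Filter.map_bot, Filter.eventually_bot,
    Set.setOf_true]
  exact Real.sInf_of_not_bddBelow not_bddBelow_univ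

private lemma limsup_real_zero {α : Type*} (f : Filter α) :
    Filter.limsup (fun _ => (0 : ℝ)) f = 0 := by
  rcases f.eq_or_neBot with rfl | h
  · exact limsup_real_bot _
  · exact Filter.limsup_const 0

private lemma real_le_of_forall_pos {a b : ℝ} (h : ∀ ε > 0, a ≤ b + ε) : a ≤ b := by
  by_contra hc
  push_neg at hc
  have := h ((a - b) / 2) (by linarith)
  linarith

/-- A submetry preserves ascending slopes of locally Lipschitz functions:
the slope of `g ∘ P` at `x` equals the slope of `g` at `P x`. -/
theorem submetry_ascendingSlope_comp {X Y : Type*} [MetricSpace X] [MetricSpace Y]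
    (P : X → Y) (hP : IsSubmetry P) (g : Y → ℝ) (hg : LocallyLipschitz g) (x : X) :
    ascendingSlope (g ∘ P) x = ascendingSlope g (P x) := by
  classical
  -- P is 1-Lipschitz
  have hPl : ∀ w z : X, dist (P w) (P z) ≤ dist w z := by
    intro w z
    by_contra h
    push_neg at h
    have hr : 0 < dist (P w) (P z) := lt_of_le_of_lt dist_nonneg h
    have him := hP z (dist (P w) (P z)) hr
    have hw : w ∈ Metric.ball z (dist (P w) (P z)) := by rwa [Metric.mem_ball]
    have : P w ∈ Metric.ball (P z) (dist (P w) (P z)) :=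
      him ▸ Set.mem_image_of_mem P hw
    exact absurd (Metric.mem_ball.mp this) (lt_irrefl _)
  have hPcont : Continuous P :=
    (LipschitzWith.of_dist_le_mul (K := 1) fun a b => by
      rw [NNReal.coe_one, one_mul]; exact hPl a b).continuous
  obtain ⟨K, t, ht, hKt⟩ := hg (P x)
  obtain ⟨ρ, hρ, hballt⟩ := Metric.mem_nhds_iff.mp ht
  have hxt : P x ∈ t := hballt (Metric.mem_ball_self hρ)
  set qX : X → ℝ := fun w => max (g (P w) - g (P x)) 0 / dist w x with hqXdef
  set qY : Y → ℝ := fun v => max (g v - g (P x)) 0 / dist v (P x) with hqYdef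
  have hgoal : ascendingSlope (g ∘ P) x = Filter.limsup qX (𝓝[≠] x) := rfl
  have hgoal' : ascendingSlope g (P x) = Filter.limsup qY (𝓝[≠] (P x)) := rfl
  rw [hgoal, hgoal']
  have hqX0 : ∀ w, 0 ≤ qX w := fun w => div_nonneg (le_max_right _ _) dist_nonneg
  have hqY0 : ∀ v, 0 ≤ qY v := fun v => div_nonneg (le_max_right _ _) dist_nonneg
  -- numerator bound
  have hnum : ∀ v ∈ t, max (g v - g (P x)) 0 ≤ (K : ℝ) * dist v (P x) := by
    intro v hv
    refine max_le ?_ (by positivity)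
    calc g v - g (P x) ≤ |g v - g (P x)| := le_abs_self _
      _ = dist (g v) (g (P x)) := (Real.dist_eq _ _).symm
      _ ≤ (K : ℝ) * dist v (P x) := hKt.dist_le_mul v hv (P x) hxt
  have hqYK : ∀ v ∈ Metric.ball (P x) ρ, qY v ≤ (K : ℝ) := by
    intro v hv
    have h1 := hnum v (hballt hv)
    rcases eq_or_lt_of_le (dist_nonneg : (0:ℝ) ≤ dist v (P x)) with h | h
    · have : max (g v - g (P x)) 0 = 0 :=
        le_antisymm (by rw [← h] at h1; simpa using h1) (le_max_right _ _)
      simp [hqYdef, this]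
    · rw [hqYdef]
      exact div_le_of_le_mul₀ h.le (by positivity) h1
  have hqXK : ∀ w, P w ∈ Metric.ball (P x) ρ → qX w ≤ (K : ℝ) := by
    intro w hw
    have h1 := hnum (P w) (hballt hw)
    have h2 : max (g (P w) - g (P x)) 0 ≤ (K : ℝ) * dist w x :=
      h1.trans (mul_le_mul_of_nonneg_left (hPl w x) (by positivity))
    rcases eq_or_lt_of_le (dist_nonneg : (0:ℝ) ≤ dist w x) with h | h
    · have : max (g (P w) - g (P x)) 0 = 0 :=
        le_antisymm (by rw [← h] at h2; simpa using h2) (le_max_right _ _)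
      simp [hqXdef, this]
    · rw [hqXdef]
      exact div_le_of_le_mul₀ h.le (by positivity) h2
  -- eventual bounds
  have hYballmem : Metric.ball (P x) ρ ∈ 𝓝[≠] (P x) :=
    mem_nhdsWithin_of_mem_nhds (Metric.ball_mem_nhds _ hρ)
  have hYbound : ∀ᶠ v in 𝓝[≠] (P x), qY v ≤ (K : ℝ) :=
    Filter.eventually_of_mem hYballmem hqYK
  have hXpre : P ⁻¹' Metric.ball (P x) ρ ∈ 𝓝[≠] x :=
    mem_nhdsWithin_of_mem_nhds
      (hPcont.continuousAt.preimage_mem_nhds (Metric.ball_mem_nhds _ hρ))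
  have hXbound : ∀ᶠ w in 𝓝[≠] x, qX w ≤ (K : ℝ) :=
    Filter.eventually_of_mem hXpre fun w hw => hqXK w hw
  have bddX : Filter.IsBoundedUnder (· ≤ ·) (𝓝[≠] x) qX := ⟨(K : ℝ), hXbound⟩
  have bddY : Filter.IsBoundedUnder (· ≤ ·) (𝓝[≠] (P x)) qY := ⟨(K : ℝ), hYbound⟩
  by_cases hbot : 𝓝[≠] (P x) = ⊥
  · -- `P x` is isolated: both slopes vanish
    have h0 : (∅ : Set Y) ∈ 𝓝[≠] (P x) := by rw [hbot]; exact Filter.mem_bot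
    rw [Metric.mem_nhdsWithin_iff] at h0
    obtain ⟨r, hr, hrsub⟩ := h0
    have hPconst : ∀ w ∈ Metric.ball x r, P w = P x := by
      intro w hw
      by_contra hne
      have : P w ∈ Metric.ball (P x) r := (hP x r hr) ▸ Set.mem_image_of_mem P hw
      exact hrsub ⟨this, hne⟩
    have hq0 : qX =ᶠ[𝓝[≠] x] fun _ => (0 : ℝ) := by
      refine Filter.eventually_of_mem
        (mem_nhdsWithin_of_mem_nhds (Metric.ball_mem_nhds _ hr)) fun w hw => ?_
      simp [hqXdef, hPconst w hw]
    rw [hbot, Filter.limsup_congr hq0, limsup_real_zero, limsup_real_bot]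
  · haveI hYne : (𝓝[≠] (P x)).NeBot := ⟨hbot⟩
    haveI hXne : (𝓝[≠] x).NeBot := by
      refine ⟨fun hXbot => hbot ?_⟩
      have h0 : (∅ : Set X) ∈ 𝓝[≠] x := by rw [hXbot]; exact Filter.mem_bot
      rw [Metric.mem_nhdsWithin_iff] at h0
      obtain ⟨r, hr, hrsub⟩ := h0
      rw [← Filter.empty_mem_iff_bot, Metric.mem_nhdsWithin_iff]
      refine ⟨r, hr, fun v hv => ?_⟩
      obtain ⟨hv1, hv2⟩ := hv
      rw [← hP x r hr] at hv1
      obtain ⟨w, hw, rfl⟩ := hv1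
      have hwx : w = x := by
        by_contra hne
        exact hrsub (⟨hw, hne⟩ : w ∈ Metric.ball x r ∩ {x}ᶜ)
      simp [hwx] at hv2
    have cbdX : Filter.IsCoboundedUnder (· ≤ ·) (𝓝[≠] x) qX :=
      Filter.isCoboundedUnder_le_of_le _ hqX0
    have cbdY : Filter.IsCoboundedUnder (· ≤ ·) (𝓝[≠] (P x)) qY :=
      Filter.isCoboundedUnder_le_of_le _ hqY0
    set L := Filter.limsup qX (𝓝[≠] x) with hL
    set M := Filter.limsup qY (𝓝[≠] (P x)) with hM
    have hL0 : 0 ≤ L :=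
      Filter.le_limsup_of_frequently_le ((Filter.Eventually.of_forall hqX0).frequently) bddX
    have hM0 : 0 ≤ M :=
      Filter.le_limsup_of_frequently_le ((Filter.Eventually.of_forall hqY0).frequently) bddY
    have hK0 : (0:ℝ) ≤ K := K.coe_nonneg
    refine le_antisymm ?_ ?_
    · -- L ≤ M
      refine real_le_of_forall_pos fun ε hε => ?_
      have hev : ∀ᶠ v in 𝓝[≠] (P x), qY v < M + ε :=
        Filter.eventually_lt_of_limsup_lt (by linarith) bddY
      rw [eventually_nhdsWithin_iff, Metric.eventually_nhds_iff] at hev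
      obtain ⟨δ, hδ, hδ'⟩ := hev
      refine Filter.limsup_le_of_le cbdX ?_
      have hmem : Metric.ball x δ ∈ 𝓝[≠] x :=
        mem_nhdsWithin_of_mem_nhds (Metric.ball_mem_nhds _ hδ)
      filter_upwards [hmem, self_mem_nhdsWithin] with w hw hwne
      by_cases hPw : P w = P x
      · have : qX w = 0 := by simp [hqXdef, hPw]
        linarith
      · have hd : dist (P w) (P x) ≤ dist w x := hPl w x
        have hd0 : 0 < dist (P w) (P x) := dist_pos.mpr hPw
        have h1 : qX w ≤ qY (P w) := by
          rw [hqXdef, hqYdef]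
          exact div_le_div_of_nonneg_left (le_max_right _ _) hd0 hd
        have h2 : qY (P w) < M + ε :=
          hδ' (lt_of_le_of_lt hd (Metric.mem_ball.mp hw)) hPw
        linarith
    · -- M ≤ L
      have key : ∀ ε > 0, M ≤ L + ε * (1 + K) := by
        intro ε hε
        have hev : ∀ᶠ w in 𝓝[≠] x, qX w < L + ε :=
          Filter.eventually_lt_of_limsup_lt (by linarith) bddX
        rw [eventually_nhdsWithin_iff, Metric.eventually_nhds_iff] at hev
        obtain ⟨δ₁, hδ₁, hδ₁'⟩ := hev
        refine Filter.limsup_le_of_le cbdY ?_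
        have hmem : Metric.ball (P x) (min ρ (δ₁ / (1 + ε))) ∈ 𝓝[≠] (P x) :=
          mem_nhdsWithin_of_mem_nhds (Metric.ball_mem_nhds _ (by positivity))
        filter_upwards [hmem, self_mem_nhdsWithin] with v hv hvne
        set d := dist v (P x) with hd
        have hd0 : 0 < d := dist_pos.mpr hvne
        have hdρ : d < ρ := lt_of_lt_of_le (Metric.mem_ball.mp hv) (min_le_left _ _)
        have hdδ : (1 + ε) * d < δ₁ := by
          have h1 : d < δ₁ / (1 + ε) :=
            lt_of_lt_of_le (Metric.mem_ball.mp hv) (min_le_right _ _)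
          have h2 : (0:ℝ) < 1 + ε := by linarith
          calc (1 + ε) * d < (1 + ε) * (δ₁ / (1 + ε)) := by
                exact mul_lt_mul_of_pos_left h1 h2
            _ = δ₁ := by field_simp
        -- lift v through the submetry
        have hvball : v ∈ Metric.ball (P x) ((1 + ε) * d) := by
          rw [Metric.mem_ball]
          nlinarith
        rw [← hP x ((1 + ε) * d) (by positivity)] at hvball
        obtain ⟨w, hw, hPw⟩ := hvball
        have hwdist : dist w x < (1 + ε) * d := Metric.mem_ball.mp hw
        have hwne : w ≠ x := fun h => hvne (by rw [← hPw, h]; exact rfl)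
        have hdw0 : 0 < dist w x := dist_pos.mpr hwne
        have hddw : d ≤ dist w x := by rw [hd, ← hPw]; exact hPl w x
        set N := max (g v - g (P x)) 0 with hN
        have hN0 : 0 ≤ N := le_max_right _ _
        have hNKd : N ≤ (K : ℝ) * d := hnum v (hballt (Metric.mem_ball.mpr hdρ))
        have hqXw : qX w < L + ε := hδ₁' (lt_trans hwdist hdδ) hwne
        have hqXw' : qX w = N / dist w x := by simp only [hqXdef]; rw [hPw]
        have h3 : N / d ≤ N / dist w x + ε * K := by
          have heq : N / dist w x + ε * (K:ℝ) = (N + ε * K * dist w x) / dist w x := by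
            field_simp
          rw [heq, div_le_div_iff₀ hd0 hdw0]
          nlinarith [mul_le_mul_of_nonneg_right hNKd (show (0:ℝ) ≤ dist w x - d by linarith),
            mul_le_mul_of_nonneg_left (show dist w x - d ≤ ε * d by nlinarith)
              (show (0:ℝ) ≤ (K:ℝ) * d by positivity),
            mul_le_mul_of_nonneg_left hddw (show (0:ℝ) ≤ ε * K * d by positivity)]
        have : qY v = N / d := rfl
        rw [this]
        calc N / d ≤ N / dist w x + ε * K := h3
          _ = qX w + ε * K := by rw [hqXw']
          _ ≤ L + ε + ε * K := by linarith
          _ = L + ε * (1 + K) := by ring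
      refine real_le_of_forall_pos fun δ hδ => ?_
      have h1 := key (δ / (1 + K)) (by positivity)
      have h2 : δ / (1 + K) * (1 + K) = δ := by field_simp
      linarith [h1, h2.le]
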